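/- Let G be a group, X ⊆ A^G a non-trivial strongly irreducible subshift with constant K, and H ≤ G a subgroup containing K. Then Aut(X|_H) embeds into Aut(X). -/

import Mathlib

/-- The (left) shift action on configurations: `(shift g x) h = x (g⁻¹ * h)`. -/
def shift {G A : Type*} [Group G] (g : G) (x : G → A) : G → A := fun h => x (g⁻¹ * h)

/-- A subshift: a closed, shift-invariant subset of the full shift `A^G`. -/
def IsSubshift {G A : Type*} [Group G] [TopologicalSpace A] (X : Set (G → A)) : Prop :=
  IsClosed X ∧ ∀ g : G, ∀ x ∈ X, shift g x ∈ X

/-- `X` is strongly irreducible with constant `K`: whenever `S * K ∩ T = ∅`, any two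
patterns of `X` with supports `S` and `T` can be jointly realized in `X`. -/
def StronglyIrreducible {G A : Type*} [Group G] (X : Set (G → A)) (K : Finset G) : Prop :=
  ∀ S T : Finset G, (∀ s ∈ S, ∀ k ∈ K, s * k ∉ T) →
    ∀ x ∈ X, ∀ y ∈ X, ∃ z ∈ X, (∀ g ∈ S, z g = x g) ∧ (∀ g ∈ T, z g = y g)

/-- The shift action on a shift-invariant subset, as a map `X → X`. -/
def shiftX {G A : Type*} [Group G] (X : Set (G → A))
    (hX : ∀ g : G, ∀ x ∈ X, shift g x ∈ X) (g : G) (x : X) : X :=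
  ⟨shift g (x : G → A), hX g x x.2⟩

/-- The automorphism group of a subshift `X`: shift-commuting self-homeomorphisms of `X`,
as a subgroup of the permutation group of `X`. -/
def Aut {G A : Type*} [Group G] [TopologicalSpace A] (X : Set (G → A))
    (hX : ∀ g : G, ∀ x ∈ X, shift g x ∈ X) : Subgroup (Equiv.Perm X) where
  carrier := {φ | Continuous φ ∧ Continuous φ.symm ∧
    ∀ (g : G) (x : X), φ (shiftX X hX g x) = shiftX X hX g (φ x)}
  one_mem' := by
    refine ⟨?_, ?_, fun g x => rfl⟩
    · simpa using continuous_id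
    · exact continuous_id
  mul_mem' := by
    rintro a b ⟨ha1, ha2, ha3⟩ ⟨hb1, hb2, hb3⟩
    refine ⟨?_, ?_, fun g x => ?_⟩
    · have : ⇑(a * b) = ⇑a ∘ ⇑b := rfl
      rw [this]; exact ha1.comp hb1
    · have : ⇑(a * b).symm = ⇑b.symm ∘ ⇑a.symm := rfl
      rw [this]; exact hb2.comp ha2
    · have h1 : (a * b) (shiftX X hX g x) = a (b (shiftX X hX g x)) := rfl
      have h2 : (a * b) x = a (b x) := rfl
      rw [h1, h2, hb3, ha3]
  inv_mem' := by
    rintro a ⟨h1, h2, h3⟩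
    refine ⟨?_, ?_, fun g x => ?_⟩
    · have : ⇑(a⁻¹) = ⇑a.symm := rfl
      rw [this]; exact h2
    · have : ⇑(a⁻¹).symm = ⇑a := rfl
      rw [this]; exact h1
    · apply a.injective
      have hai : ∀ y, a (a⁻¹ y) = y := fun y => a.apply_symm_apply y
      rw [hai, h3, hai]

/-- Restriction of a configuration to a subgroup. -/
def restrictH {G A : Type*} [Group G] (H : Subgroup G) (x : G → A) : H → A :=
  fun h => x (h : G)

namespace Stmt12Aux

variable {G A : Type*} [Group G]

/-- The restriction of `x` to the coset `gH`, viewed as a configuration on `H`. -/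
def rho (H : Subgroup G) (x : G → A) (g : G) : H → A := fun h => x (g * h)

lemma rho_mem {X : Set (G → A)} (hs : ∀ g : G, ∀ x ∈ X, shift g x ∈ X)
    (H : Subgroup G) {x : G → A} (hx : x ∈ X) (g : G) : rho H x g ∈ restrictH H '' X :=
  ⟨shift g⁻¹ x, hs g⁻¹ x hx, by funext h; simp [restrictH, shift, rho, inv_inv]⟩

section Topo
variable [TopologicalSpace A]

lemma mem_of_finite_approx {X : Set (G → A)} (hcl : IsClosed X) (x : G → A)
    (h : ∀ S : Finset G, ∃ z ∈ X, ∀ g ∈ S, z g = x g) : x ∈ X := by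
  rw [← hcl.closure_eq, mem_closure_iff]
  intro o ho hxo
  obtain ⟨I, u, hu, hsub⟩ := isOpen_pi_iff.mp ho x hxo
  obtain ⟨z, hzX, hz⟩ := h I
  refine ⟨z, hsub fun i hi => ?_, hzX⟩
  rw [hz i hi]
  exact (hu i hi).2

/-- The gluing lemma: if every coset-restriction of `x` is a restriction of an element
of `X`, then `x ∈ X`, by strong irreducibility with constant inside `H`. -/
lemma glue {X : Set (G → A)} (hX : IsSubshift X) (hne : X.Nonempty)
    (H : Subgroup G) (KH : Finset H)
    (hSI : StronglyIrreducible X (KH.map ⟨Subtype.val, Subtype.val_injective⟩))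
    (x : G → A) (hx : ∀ g : G, rho H x g ∈ restrictH H '' X) : x ∈ X := by
  classical
  apply mem_of_finite_approx hX.1
  suffices hn : ∀ (n : ℕ) (S : Finset G),
      (S.image (fun g => (QuotientGroup.mk g : G ⧸ H))).card ≤ n →
      ∃ z ∈ X, ∀ g ∈ S, z g = x g from fun S => hn _ S le_rfl
  intro n
  induction n with
  | zero =>
    intro S hS
    obtain ⟨z, hz⟩ := hne
    have hSe : S = ∅ := by
      rwa [Nat.le_zero, Finset.card_eq_zero, Finset.image_eq_empty] at hS
    exact ⟨z, hz, by simp [hSe]⟩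
  | succ n ih =>
    intro S hS
    rcases S.eq_empty_or_nonempty with h | ⟨g₀, hg₀⟩
    · obtain ⟨z, hz⟩ := hne
      exact ⟨z, hz, by simp [h]⟩
    set S' := S.filter (fun g => (QuotientGroup.mk g : G ⧸ H) ≠ QuotientGroup.mk g₀) with hS'
    set T := S.filter (fun g => (QuotientGroup.mk g : G ⧸ H) = QuotientGroup.mk g₀) with hT
    have hcard : (S'.image (fun g => (QuotientGroup.mk g : G ⧸ H))).card ≤ n := by
      have hsub : S'.image (fun g => (QuotientGroup.mk g : G ⧸ H)) ⊆
          (S.image (fun g => (QuotientGroup.mk g : G ⧸ H))).erase (QuotientGroup.mk g₀) := by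
        intro q hq
        obtain ⟨g, hg, rfl⟩ := Finset.mem_image.mp hq
        obtain ⟨hgS, hgne⟩ := Finset.mem_filter.mp hg
        exact Finset.mem_erase.mpr ⟨hgne, Finset.mem_image_of_mem _ hgS⟩
      have h1 := Finset.card_le_card hsub
      rw [Finset.card_erase_of_mem
        (Finset.mem_image_of_mem (fun g => (QuotientGroup.mk g : G ⧸ H)) hg₀)] at h1
      omega
    obtain ⟨z', hz'X, hz'eq⟩ := ih S' hcard
    obtain ⟨w, hwX, hwr⟩ := hx g₀
    have hx₀X : shift g₀ w ∈ X := hX.2 g₀ w hwX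
    have hx₀ : ∀ g, (QuotientGroup.mk g : G ⧸ H) = QuotientGroup.mk g₀ →
        shift g₀ w g = x g := by
      intro g hq
      have hh : g₀⁻¹ * g ∈ H := QuotientGroup.eq.mp hq.symm
      have := congrFun hwr ⟨g₀⁻¹ * g, hh⟩
      simpa [restrictH, rho, shift, mul_inv_cancel_left] using this
    have hdisj : ∀ s ∈ S', ∀ k ∈ KH.map ⟨Subtype.val, Subtype.val_injective⟩, s * k ∉ T := by
      intro s hs k hk hmem
      obtain ⟨k', _, rfl⟩ := Finset.mem_map.mp hk
      have hsne := (Finset.mem_filter.mp hs).2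
      have hsk : (QuotientGroup.mk (s * (k' : G)) : G ⧸ H) = QuotientGroup.mk g₀ :=
        (Finset.mem_filter.mp hmem).2
      rw [QuotientGroup.mk_mul_of_mem s k'.2] at hsk
      exact hsne hsk
    obtain ⟨z, hzX, hzS', hzT⟩ := hSI S' T hdisj z' hz'X (shift g₀ w) hx₀X
    refine ⟨z, hzX, fun g hg => ?_⟩
    by_cases hq : (QuotientGroup.mk g : G ⧸ H) = QuotientGroup.mk g₀
    · rw [hzT g (Finset.mem_filter.mpr ⟨hg, hq⟩)]
      exact hx₀ g hq
    · rw [hzS' g (Finset.mem_filter.mpr ⟨hg, hq⟩)]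
      exact hz'eq g (Finset.mem_filter.mpr ⟨hg, hq⟩)

variable {X : Set (G → A)} (hX : IsSubshift X) {H : Subgroup G}
variable (hinvH : ∀ h : H, ∀ y ∈ restrictH H '' X, shift h y ∈ restrictH H '' X)

/-- The extension of `φ ∈ Aut(X|_H)` to configurations in `X`. -/
def E (φ : ↥(Aut (restrictH H '' X) hinvH)) (x : ↥X) : G → A :=
  fun g => ((φ : Equiv.Perm ↥(restrictH H '' X))
    ⟨rho H x.1 g, rho_mem hX.2 H x.2 g⟩ : H → A) 1

lemma E_eval (φ : ↥(Aut (restrictH H '' X) hinvH)) (x : ↥X) {g : G}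
    {y : ↥(restrictH H '' X)} (h : (y : H → A) = rho H x.1 g) :
    E hX hinvH φ x g = ((φ : Equiv.Perm ↥(restrictH H '' X)) y : H → A) 1 := by
  obtain ⟨y, hy⟩ := y
  dsimp only at h
  subst h
  rfl

lemma E_apply_mul (φ : ↥(Aut (restrictH H '' X) hinvH)) (x : ↥X) (g : G) (h : H) :
    E hX hinvH φ x (g * h) = ((φ : Equiv.Perm ↥(restrictH H '' X))
      ⟨rho H x.1 g, rho_mem hX.2 H x.2 g⟩ : H → A) h := by
  obtain ⟨-, -, hcomm⟩ := φ.2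
  have heq : E hX hinvH φ x (g * ↑h) = ((φ : Equiv.Perm ↥(restrictH H '' X))
      (shiftX _ hinvH h⁻¹ ⟨rho H x.1 g, rho_mem hX.2 H x.2 g⟩) : H → A) 1 := by
    refine E_eval hX hinvH φ x ?_
    funext h'
    show rho H x.1 g ((h⁻¹)⁻¹ * h') = x.1 (g * ↑h * ↑h')
    simp [rho, mul_assoc]
  rw [heq, hcomm h⁻¹]
  show ((φ : Equiv.Perm ↥(restrictH H '' X))
      ⟨rho H x.1 g, rho_mem hX.2 H x.2 g⟩ : H → A) ((h⁻¹)⁻¹ * 1) = _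
  simp

lemma rho_E (φ : ↥(Aut (restrictH H '' X) hinvH)) (x : ↥X) (g : G) :
    rho H (E hX hinvH φ x) g = ((φ : Equiv.Perm ↥(restrictH H '' X))
      ⟨rho H x.1 g, rho_mem hX.2 H x.2 g⟩ : H → A) :=
  funext fun h => E_apply_mul hX hinvH φ x g h

lemma E_mem (hne : X.Nonempty) (KH : Finset H)
    (hSI : StronglyIrreducible X (KH.map ⟨Subtype.val, Subtype.val_injective⟩))
    (φ : ↥(Aut (restrictH H '' X) hinvH)) (x : ↥X) : E hX hinvH φ x ∈ X := by
  refine glue hX hne H KH hSI _ fun g => ?_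
  rw [rho_E hX hinvH φ x g]
  exact ((φ : Equiv.Perm ↥(restrictH H '' X)) ⟨rho H x.1 g, rho_mem hX.2 H x.2 g⟩).2

lemma E_one (x : ↥X) : E hX hinvH 1 x = x.1 := by
  funext g
  show ((1 : Equiv.Perm ↥(restrictH H '' X)) ⟨rho H x.1 g, rho_mem hX.2 H x.2 g⟩ : H → A) 1
      = x.1 g
  simp [rho]

lemma E_mul (φ ψ : ↥(Aut (restrictH H '' X) hinvH)) (x : ↥X)
    (hmem : E hX hinvH ψ x ∈ X) :
    E hX hinvH φ ⟨E hX hinvH ψ x, hmem⟩ = E hX hinvH (φ * ψ) x := by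
  funext g
  have h1 : E hX hinvH φ ⟨E hX hinvH ψ x, hmem⟩ g
      = ((φ : Equiv.Perm ↥(restrictH H '' X))
        ((ψ : Equiv.Perm ↥(restrictH H '' X))
          ⟨rho H x.1 g, rho_mem hX.2 H x.2 g⟩) : H → A) 1 :=
    E_eval hX hinvH φ _ (rho_E hX hinvH ψ x g).symm
  rw [h1]
  rfl

lemma E_cont (φ : ↥(Aut (restrictH H '' X) hinvH)) :
    Continuous (fun x : ↥X => E hX hinvH φ x) := by
  obtain ⟨hc, -, -⟩ := φ.2
  refine continuous_pi fun g => ?_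
  have h0 : Continuous (fun x : ↥X => rho H x.1 g) := by
    apply continuous_pi
    intro h
    show Continuous fun x : ↥X => (x : G → A) (g * (h : G))
    exact (continuous_apply (g * (h : G))).comp continuous_subtype_val
  have h1 : Continuous (fun x : ↥X =>
      (⟨rho H x.1 g, rho_mem hX.2 H x.2 g⟩ : ↥(restrictH H '' X))) :=
    Continuous.subtype_mk h0 _
  exact (continuous_apply (1 : H)).comp (continuous_subtype_val.comp (hc.comp h1))

lemma E_shift (φ : ↥(Aut (restrictH H '' X) hinvH)) (t : G) (x : ↥X) :
    E hX hinvH φ (shiftX X hX.2 t x) = shift t (E hX hinvH φ x) := by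
  funext g
  have h1 : E hX hinvH φ (shiftX X hX.2 t x) g
      = ((φ : Equiv.Perm ↥(restrictH H '' X))
        ⟨rho H x.1 (t⁻¹ * g), rho_mem hX.2 H x.2 (t⁻¹ * g)⟩ : H → A) 1 := by
    refine E_eval hX hinvH φ _ ?_
    funext h
    show x.1 (t⁻¹ * g * ↑h) = shift t x.1 (g * ↑h)
    simp [shift, rho, mul_assoc]
  rw [h1]
  rfl

end Topo

end Stmt12Aux

/-- the automorphism group of the restriction `X|_H` of a non-trivial
strongly irreducible subshift with constant `K ⊆ H` embeds into `Aut(X)`. -/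
theorem stmt12 {G A : Type*} [Group G] [Fintype A] [TopologicalSpace A] [DiscreteTopology A]
    (X : Set (G → A)) (hX : IsSubshift X) (hnt : ∃ x ∈ X, ∃ y ∈ X, x ≠ y)
    (H : Subgroup G) (KH : Finset H)
    (hSI : StronglyIrreducible X (KH.map ⟨Subtype.val, Subtype.val_injective⟩))
    (hinvH : ∀ h : H, ∀ y ∈ restrictH H '' X, shift h y ∈ restrictH H '' X) :
    ∃ f : (Aut (restrictH H '' X) hinvH) →* (Aut X hX.2), Function.Injective f := by
  classical
  obtain ⟨x₀, hx₀, -⟩ := hnt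
  have hne : X.Nonempty := ⟨x₀, hx₀⟩
  set Y := restrictH H '' X with hY
  -- membership of the extension
  have Emem : ∀ (φ : ↥(Aut Y hinvH)) (x : ↥X), Stmt12Aux.E hX hinvH φ x ∈ X :=
    fun φ x => Stmt12Aux.E_mem hX hinvH hne KH hSI φ x
  -- the permutation of X induced by φ
  let P : ↥(Aut Y hinvH) → Equiv.Perm ↥X := fun φ =>
    { toFun := fun x => ⟨Stmt12Aux.E hX hinvH φ x, Emem φ x⟩
      invFun := fun x => ⟨Stmt12Aux.E hX hinvH φ⁻¹ x, Emem φ⁻¹ x⟩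
      left_inv := by
        intro x
        refine Subtype.ext ?_
        show Stmt12Aux.E hX hinvH φ⁻¹ ⟨Stmt12Aux.E hX hinvH φ x, _⟩ = x.1
        rw [Stmt12Aux.E_mul hX hinvH φ⁻¹ φ x (Emem φ x), inv_mul_cancel,
          Stmt12Aux.E_one hX hinvH x]
      right_inv := by
        intro x
        refine Subtype.ext ?_
        show Stmt12Aux.E hX hinvH φ ⟨Stmt12Aux.E hX hinvH φ⁻¹ x, _⟩ = x.1
        rw [Stmt12Aux.E_mul hX hinvH φ φ⁻¹ x (Emem φ⁻¹ x), mul_inv_cancel,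
          Stmt12Aux.E_one hX hinvH x] }
  have Pmem : ∀ φ : ↥(Aut Y hinvH), P φ ∈ Aut X hX.2 := by
    intro φ
    refine ⟨?_, ?_, ?_⟩
    · exact Continuous.subtype_mk (Stmt12Aux.E_cont hX hinvH φ) _
    · exact Continuous.subtype_mk (Stmt12Aux.E_cont hX hinvH φ⁻¹) _
    · intro t x
      exact Subtype.ext (Stmt12Aux.E_shift hX hinvH φ t x)
  refine ⟨MonoidHom.mk' (fun φ => ⟨P φ, Pmem φ⟩) ?_, ?_⟩
  · -- multiplicativity
    intro a b
    refine Subtype.ext (Equiv.ext fun x => Subtype.ext ?_)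
    show Stmt12Aux.E hX hinvH (a * b) x
        = Stmt12Aux.E hX hinvH a ⟨Stmt12Aux.E hX hinvH b x, Emem b x⟩
    exact (Stmt12Aux.E_mul hX hinvH a b x (Emem b x)).symm
  · -- injectivity
    rw [injective_iff_map_eq_one]
    intro φ hφ
    have hφ' : ∀ x : ↥X, Stmt12Aux.E hX hinvH φ x = x.1 := by
      intro x
      have := congrArg (fun (ψ : ↥(Aut X hX.2)) => ((ψ : Equiv.Perm ↥X) x : G → A)) hφ
      simp at this; exact this
    refine Subtype.ext (Equiv.ext fun y => Subtype.ext ?_)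
    obtain ⟨x', hx', hre⟩ := y.2
    funext h
    have hy1 : (y : H → A) = Stmt12Aux.rho H x' 1 := by
      funext h'
      rw [← hre]
      show x' (h' : G) = x' ((1 : G) * h')
      rw [one_mul]
    have hyy : (⟨Stmt12Aux.rho H x' 1, Stmt12Aux.rho_mem hX.2 H hx' 1⟩ :
        ↥(restrictH H '' X)) = y := Subtype.ext hy1.symm
    have key : Stmt12Aux.E hX hinvH φ ⟨x', hx'⟩ ((1 : G) * h)
        = ((φ : Equiv.Perm ↥(restrictH H '' X)) y : H → A) h := by
      rw [Stmt12Aux.E_apply_mul hX hinvH φ ⟨x', hx'⟩ 1 h]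
      exact congrArg (fun z => ((φ : Equiv.Perm ↥(restrictH H '' X)) z : H → A) h) hyy
    rw [← key, hφ' ⟨x', hx'⟩]
    show x' ((1 : G) * h) = (y : H → A) h
    rw [one_mul, ← hre]
    rfl
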